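/- arXiv:1810.05230 — 2 statements merged into one kernel-verified Lean document; each statement's English description precedes it below -/
import Mathlib

section
/- Let J be as given and let J' be the splitting of J at a vertex (μ, eν) ∈ J all of whose outgoing edges in the coding graph E_J are positive. Then the number of negative edges of E_{J'} is at most the number of negative edges of E_J. -/
/-- A finite directed multigraph. -/
structure FinGraph where
  V : Type
  E : Type
  fintV : Fintype V
  fintE : Fintype E
  src : E → V
  rng : E → V

variable {G : FinGraph}

/-- A finite path in the graph `G`: a source vertex together with a compatible
list of edges (a vertex is a path of length 0). -/
structure FPath (G : FinGraph) where
  source : G.V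
  edges : List G.E
  head_src : ∀ e ∈ edges.head?, G.src e = source
  chain : edges.Chain' fun e f => G.rng e = G.src f

/-- The range (terminal vertex) of a finite path. -/
def FPath.range (p : FPath G) : G.V :=
  p.edges.getLast?.elim p.source G.rng

/-- The length-0 path at a vertex. -/
def FPath.nil (G : FinGraph) (v : G.V) : FPath G :=
  ⟨v, [], by simp, List.isChain_nil⟩

/-- `p.Prefix q` : the path `p` is an initial segment of the path `q`. -/
def FPath.Prefix (p q : FPath G) : Prop :=
  p.source = q.source ∧ p.edges <+: q.edges

/-- The path obtained by removing the first edge (the tail `κ` of `ν = eκ`). -/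
def FPath.tail (p : FPath G) : FPath G where
  source := p.edges.head?.elim p.source G.rng
  edges := p.edges.tail
  head_src := by
    cases hp : p.edges with
    | nil => simp
    | cons a l =>
      have h := p.chain
      rw [hp, List.Chain', List.isChain_cons] at h
      intro e he
      simp only [hp, List.head?_cons, Option.elim, List.tail_cons] at he ⊢
      exact (h.1 e he).symm
  chain := p.chain.tail

/-- An infinite path in the graph `G`. -/
structure IPath (G : FinGraph) where
  edges : ℕ → G.E
  chain : ∀ i, G.rng (edges i) = G.src (edges (i + 1))

/-- The source vertex of an infinite path. -/
def IPath.source (p : IPath G) : G.V := G.src (p.edges 0)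

/-- The cylinder set `Z(p)` of a finite path `p`: all infinite paths with prefix `p`. -/
def cylinder (p : FPath G) : Set (IPath G) :=
  {q | q.source = p.source ∧ ∀ i, (h : i < p.edges.length) → q.edges i = p.edges.get ⟨i, h⟩}

/-- A finite collection `S` of finite paths is a partition of the path `ν`:
the cylinder sets are pairwise disjoint with union `Z(ν)`. -/
def IsPartitionOfPath (S : Set (FPath G)) (ν : FPath G) : Prop :=
  S.Finite ∧ (∀ p ∈ S, ∀ q ∈ S, p ≠ q → cylinder p ∩ cylinder q = ∅) ∧
    (⋃ p ∈ S, cylinder p) = cylinder ν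

/-- A finite collection `S` of finite paths is a partition of the vertex `v`. -/
def IsPartitionOf (S : Set (FPath G)) (v : G.V) : Prop :=
  IsPartitionOfPath S (FPath.nil G v)

/-- Standing assumptions: no sinks, no sources, every cycle has an exit. -/
structure Standing (G : FinGraph) : Prop where
  no_sinks : ∀ v : G.V, ∃ e, G.src e = v
  no_sources : ∀ v : G.V, ∃ e, G.rng e = v
  cycles_exit : ∀ p : FPath G, p.edges ≠ [] → p.range = p.source →
    ∃ e ∈ p.edges, ∃ f, f ≠ e ∧ G.src f = G.src e

/-- The combinatorial conditions making `u_J = Σ_{(μ,ν) ∈ J} S_μ S_ν^*` a unitary: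
`J` is finite, `s(μ) = s(ν)`, `r(μ) = r(ν)`, `|ν| ≥ 1` for all `(μ,ν) ∈ J`, and both
families of cylinder sets are pairwise disjoint with union all of `E^∞`. -/
structure IsUnitaryJ (G : FinGraph) (J : Set (FPath G × FPath G)) : Prop where
  finite : J.Finite
  src_eq : ∀ p ∈ J, (Prod.fst p).source = (Prod.snd p).source
  rng_eq : ∀ p ∈ J, FPath.range (Prod.fst p) = FPath.range (Prod.snd p)
  ne_nil : ∀ p ∈ J, (Prod.snd p).edges ≠ []
  disj₁ : ∀ p ∈ J, ∀ q ∈ J, p ≠ q → cylinder (Prod.fst p) ∩ cylinder (Prod.fst q) = ∅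
  union₁ : (⋃ p ∈ J, cylinder (Prod.fst p)) = Set.univ
  disj₂ : ∀ p ∈ J, ∀ q ∈ J, p ≠ q → cylinder (Prod.snd p) ∩ cylinder (Prod.snd q) = ∅
  union₂ : (⋃ p ∈ J, cylinder (Prod.snd p)) = Set.univ

/-- Adjacency in the coding graph `E_J`: there is an edge from `p = (μ₁, e₁ν₁)` to
`q = (μ₂, e₂ν₂)` iff the tail `ν₁` and `μ₂` are prefix-comparable
(the combinatorial content of `S_{ν₁}^* S_{μ₂} ≠ 0`). -/
def CGAdj (p q : FPath G × FPath G) : Prop :=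
  FPath.Prefix p.2.tail q.1 ∨ FPath.Prefix q.1 p.2.tail

/-- The degree `|μ₂| − |ν₁|` of the coding-graph edge from `p` to `q`. -/
def cgDeg (p q : FPath G × FPath G) : ℤ :=
  (q.1.edges.length : ℤ) - (p.2.tail.edges.length : ℤ)

/-- `IsAppend p q r` : the path `r` is the concatenation `p q`. -/
def IsAppend (p q r : FPath G) : Prop :=
  r.source = p.source ∧ q.source = p.range ∧ r.edges = p.edges ++ q.edges

/-- A finite path in the coding graph `E_J`, recorded by the (nonempty) list of
vertices of `J` it visits (a single vertex is a path of length 0). -/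
structure CGPath (G : FinGraph) (J : Set (FPath G × FPath G)) where
  verts : List (FPath G × FPath G)
  ne : verts ≠ []
  mem : ∀ v ∈ verts, v ∈ J
  adj : verts.Chain' CGAdj

/-- The `E`-label of a path in the coding graph: the list of distinguished first
edges `e` of the second coordinates of the vertices it visits. -/
def CGPath.elabel {J : Set (FPath G × FPath G)} (ω : CGPath G J) : List G.E :=
  ω.verts.filterMap fun v => v.2.edges.head?

/-- `IsLabelOf l γ` : `γ` is the `L_J`-label of the coding-graph path visiting the
vertices in the list `l` (all of whose edges are non-negative): the concatenation of
the `L_J`-labels of its edges, and the empty path at `r(μ)` for the length-0 path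
at a vertex `(μ, eν)`. -/
inductive IsLabelOf : List (FPath G × FPath G) → FPath G → Prop
  | single (p : FPath G × FPath G) (γ : FPath G) :
      γ.edges = [] → γ.source = FPath.range p.1 → IsLabelOf [p] γ
  | cons (p q : FPath G × FPath G) (rest : List (FPath G × FPath G)) (α γ δ : FPath G) :
      IsAppend p.2.tail α q.1 → IsLabelOf (q :: rest) γ → IsAppend α γ δ →
      IsLabelOf (p :: q :: rest) δ

/-- Every edge of the coding graph `E_J` is non-negative. -/
def AllEdgesNonneg (G : FinGraph) (J : Set (FPath G × FPath G)) : Prop :=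
  ∀ p ∈ J, ∀ q ∈ J, CGAdj p q → 0 ≤ cgDeg p q

/-- The coding graph `E_J` contains a non-positive cycle. -/
def HasNonposCycle (G : FinGraph) (J : Set (FPath G × FPath G)) : Prop :=
  ∃ ω : CGPath G J, 2 ≤ ω.verts.length ∧ ω.verts.getLast ω.ne = ω.verts.head ω.ne ∧
    ω.verts.Chain' fun p q => cgDeg p q ≤ 0

/-- All outgoing edges of the vertex `p` in the coding graph `E_J` are positive. -/
def AllOutPositive (G : FinGraph) (J : Set (FPath G × FPath G))
    (p : FPath G × FPath G) : Prop :=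
  ∀ q ∈ J, CGAdj p q → 0 < cgDeg p q

/-- `IsSnoc p f q` : the path `q` is `p` extended by the single edge `f`. -/
def IsSnoc (p : FPath G) (f : G.E) (q : FPath G) : Prop :=
  q.source = p.source ∧ q.edges = p.edges ++ [f]

/-- `IsSplitting G J p J'` : `J'` is the splitting of `J` at the vertex `p = (μ, eν)`,
i.e. `J' = (J ∖ {(μ,eν)}) ∪ {(μf, eνf) : f ∈ E¹, s(f) = r(μ)}`. -/
def IsSplitting (G : FinGraph) (J : Set (FPath G × FPath G)) (p : FPath G × FPath G)
    (J' : Set (FPath G × FPath G)) : Prop :=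
  p ∈ J ∧ ∀ q, q ∈ J' ↔ (q ∈ J ∧ q ≠ p) ∨
    ∃ f, G.src f = FPath.range p.1 ∧ IsSnoc p.1 f q.1 ∧ IsSnoc p.2 f q.2

/-- The set of negative edges of the coding graph `E_J`. -/
def negEdgeSet (G : FinGraph) (J : Set (FPath G × FPath G)) :
    Set ((FPath G × FPath G) × (FPath G × FPath G)) :=
  {e | e.1 ∈ J ∧ e.2 ∈ J ∧ CGAdj e.1 e.2 ∧ cgDeg e.1 e.2 < 0}

/-- `IsFinalNeg G J p q ω d` : the edge from `p` to `q` in `E_J` is a final negative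
edge with destination `d`, via the zero path `ω` from `q` to `d`; the height of the
edge is `ω.verts.length - 1`. -/
def IsFinalNeg (G : FinGraph) (J : Set (FPath G × FPath G))
    (p q : FPath G × FPath G) (ω : CGPath G J) (d : FPath G × FPath G) : Prop :=
  p ∈ J ∧ q ∈ J ∧ CGAdj p q ∧ cgDeg p q < 0 ∧
    ω.verts.head ω.ne = q ∧ ω.verts.getLast ω.ne = d ∧
    (ω.verts.Chain' fun a b => cgDeg a b = 0) ∧ AllOutPositive G J d

/-- `(E_J, E)` is left-synchronizing with delay `m` : any two paths of length `m`
(i.e. with `m+1` vertices) in `E_J` with the same `E`-label have the same source. -/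
def LeftSyncDelay (G : FinGraph) (J : Set (FPath G × FPath G)) (m : ℕ) : Prop :=
  ∀ ω ξ : CGPath G J, ω.verts.length = m + 1 → ξ.verts.length = m + 1 →
    ω.elabel = ξ.elabel → ω.verts.head ω.ne = ξ.verts.head ξ.ne

/-- An infinite path in the coding graph `E_J`. -/
structure CGIPath (G : FinGraph) (J : Set (FPath G × FPath G)) where
  verts : ℕ → FPath G × FPath G
  mem : ∀ i, verts i ∈ J
  adj : ∀ i, CGAdj (verts i) (verts (i + 1))

/-- The infinite `E`-label of an infinite coding-graph path is the infinite path `α`. -/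
def ELabelInf {J : Set (FPath G × FPath G)} (ω : CGIPath G J) (α : IPath G) : Prop :=
  ∀ i, (ω.verts i).2.edges.head? = some (α.edges i)

/-- A transducer with input alphabet `A`, output alphabet `B`, a finite state set,
an initial state and a transition function. -/
structure Transducer (A B : Type) where
  S : Type
  finS : Finite S
  init : S
  tr : S → A → S × List B

/-- The state sequence of a transducer on an infinite input word. -/
def Transducer.states {A B : Type} (T : Transducer A B) (α : ℕ → A) : ℕ → T.S
  | 0 => T.init
  | n + 1 => (T.tr (T.states α n) (α n)).1

/-- The `n`-th output block of a transducer on an infinite input word. -/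
def Transducer.outBlock {A B : Type} (T : Transducer A B) (α : ℕ → A) (n : ℕ) : List B :=
  (T.tr (T.states α n) (α n)).2

/-- The concatenation of the first `n` blocks of a sequence of finite words. -/
def joinUpTo {X : Type} (f : ℕ → List X) (n : ℕ) : List X :=
  ((List.range n).map f).flatten

/-- Two infinite concatenations of sequences of finite words are equal. -/
def StreamsEq {X : Type} (f g : ℕ → List X) : Prop :=
  (∀ n, ∃ m, joinUpTo f n <+: joinUpTo g m) ∧ ∀ n, ∃ m, joinUpTo g n <+: joinUpTo f m

/-- The type of edges of the coding graph `E_J`. -/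
def CGEdgeT (G : FinGraph) (J : Set (FPath G × FPath G)) : Type :=
  {e : (FPath G × FPath G) × (FPath G × FPath G) // e.1 ∈ J ∧ e.2 ∈ J ∧ CGAdj e.1 e.2}

/-- The sequence of edges of an infinite coding-graph path. -/
def CGIPath.edgeSeq {J : Set (FPath G × FPath G)} (ω : CGIPath G J) (i : ℕ) : CGEdgeT G J :=
  ⟨(ω.verts i, ω.verts (i + 1)), ω.mem i, ω.mem (i + 1), ω.adj i⟩

/-- Two finite paths with the same source and edge list are equal. -/
lemma FPath.ext' {G : FinGraph} {p q : FPath G} (h1 : p.source = q.source)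
    (h2 : p.edges = q.edges) : p = q := by
  cases p; cases q; simp_all

/-- Tail of a snoc extension of a path with nonempty edge list. -/
lemma snoc_tail {G : FinGraph} {p q : FPath G} {f : G.E} (h : IsSnoc p f q)
    (hne : p.edges ≠ []) :
    q.tail.source = p.tail.source ∧ q.tail.edges = p.tail.edges ++ [f] := by
  obtain ⟨hs, he⟩ := h
  cases hp : p.edges with
  | nil => exact absurd hp hne
  | cons e l =>
    constructor
    · simp [FPath.tail, he, hp]
    · simp [FPath.tail, he, hp]

/-- A negative coding-graph edge must come from the second prefix alternative. -/
lemma adj_prefix {G : FinGraph} {a b : FPath G × FPath G} (hadj : CGAdj a b)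
    (hdeg : cgDeg a b < 0) : FPath.Prefix b.1 a.2.tail := by
  rcases hadj with h | h
  · exfalso
    have := h.2.length_le
    simp only [cgDeg] at hdeg
    omega
  · exact h

/-- splitting at a vertex all of whose outgoing edges are positive does not
increase the number of negative edges of the coding graph. -/
theorem splitting_neg_edges_le (G : FinGraph) (hG : Standing G)
    (J : Set (FPath G × FPath G)) (hJ : IsUnitaryJ G J)
    (p : FPath G × FPath G) (hp : p ∈ J) (hout : AllOutPositive G J p)
    (J' : Set (FPath G × FPath G)) (hsplit : IsSplitting G J p J') :
    (negEdgeSet G J').ncard ≤ (negEdgeSet G J).ncard := by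
  classical
  obtain ⟨hpJ, hmem⟩ := hsplit
  have hνne : p.2.edges ≠ [] := hJ.ne_nil p hp
  -- the predicate "q is one of the new split vertices"
  set Sp : (FPath G × FPath G) → Prop :=
    fun q => ∃ f, G.src f = FPath.range p.1 ∧ IsSnoc p.1 f q.1 ∧ IsSnoc p.2 f q.2 with hSp
  have hmem' : ∀ q, q ∈ J' ↔ (q ∈ J ∧ q ≠ p) ∨ Sp q := hmem
  have hpJ' : p ∉ J' := by
    intro h
    rcases (hmem' p).1 h with ⟨_, h2⟩ | ⟨f, _, ⟨_, h2⟩, _⟩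
    · exact h2 rfl
    · have := congrArg List.length h2
      simp at this
  -- no negative edge leaves a split vertex
  have keyA : ∀ a b, Sp a → b ∈ J' → CGAdj a b → cgDeg a b < 0 → False := by
    intro a b ⟨f, hf, hfa1, hfa2⟩ hbJ' hadj hdeg
    obtain ⟨hts, hte⟩ := snoc_tail hfa2 hνne
    obtain ⟨hbs, hbe⟩ := adj_prefix hadj hdeg
    have hlen : b.1.edges.length < a.2.tail.edges.length := by
      simp only [cgDeg] at hdeg; omega
    have hlen' : b.1.edges.length ≤ p.2.tail.edges.length := by
      rw [hte] at hlen; simp at hlen; omega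
    have hbe' : b.1.edges <+: p.2.tail.edges := by
      exact List.prefix_of_prefix_length_le (hte ▸ hbe) (List.prefix_append _ _) hlen'
    have hadjpb : CGAdj p b := Or.inr ⟨by rw [hbs, hts], hbe'⟩
    rcases (hmem' b).1 hbJ' with ⟨hbJ, _⟩ | ⟨g, hg, hgb1, hgb2⟩
    · have := hout b hbJ hadjpb
      simp only [cgDeg] at this
      have := hbe'.length_le
      omega
    · have hadjpp : CGAdj p p := by
        refine Or.inr ⟨?_, ?_⟩
        · rw [← hgb1.1, hbs, hts]
        · refine (List.prefix_append _ [g]).trans ?_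
          rw [← hgb1.2]; exact hbe'
      have := hout p hp hadjpp
      simp only [cgDeg] at this
      have h2 := hbe'.length_le
      rw [hgb1.2] at h2
      simp at h2
      omega
  -- a negative edge into a split vertex yields a negative edge into `p`
  have keyB : ∀ a b, Sp b → CGAdj a b → cgDeg a b < 0 →
      CGAdj a p ∧ cgDeg a p < 0 := by
    intro a b ⟨f, hf, hfb1, hfb2⟩ hadj hdeg
    obtain ⟨hbs, hbe⟩ := adj_prefix hadj hdeg
    constructor
    · refine Or.inr ⟨by rw [← hfb1.1, hbs], ?_⟩
      refine (List.prefix_append _ [f]).trans ?_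
      rw [← hfb1.2]; exact hbe
    · simp only [cgDeg] at hdeg ⊢
      have := congrArg List.length hfb1.2
      simp at this
      omega
  -- finiteness of the old negative edge set
  have hfinJ : (negEdgeSet G J).Finite := by
    refine (hJ.finite.prod hJ.finite).subset ?_
    intro x hx
    exact Set.mem_prod.2 ⟨hx.1, hx.2.1⟩
  -- the injection
  refine Set.ncard_le_ncard_of_injOn
    (fun x => if Sp x.2 then (x.1, p) else x) ?_ ?_ hfinJ
  · intro x hx
    obtain ⟨haJ', hbJ', hadj, hdeg⟩ := hx
    have haJ : x.1 ∈ J := by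
      rcases (hmem' x.1).1 haJ' with ⟨h, _⟩ | hs
      · exact h
      · exact absurd (keyA x.1 x.2 hs hbJ' hadj hdeg) (by simp)
    by_cases hb : Sp x.2
    · obtain ⟨h1, h2⟩ := keyB x.1 x.2 hb hadj hdeg
      simp only [hb, if_true]
      exact ⟨haJ, hp, h1, h2⟩
    · simp only [hb, if_false]
      have hbJ : x.2 ∈ J := by
        rcases (hmem' x.2).1 hbJ' with ⟨h, _⟩ | hs
        · exact h
        · exact absurd hs hb
      exact ⟨haJ, hbJ, hadj, hdeg⟩
  · intro x hx y hy hxy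
    obtain ⟨haxJ', hbxJ', hadjx, hdegx⟩ := hx
    obtain ⟨hayJ', hbyJ', hadjy, hdegy⟩ := hy
    by_cases hbx : Sp x.2 <;> by_cases hby : Sp y.2 <;>
      simp only [hbx, hby, if_true, if_false] at hxy
    · -- both split: same first component, show second components equal
      have h1 : x.1 = y.1 := by simpa using congrArg Prod.fst hxy
      obtain ⟨f, hf, hfx1, hfx2⟩ := hbx
      obtain ⟨g, hg, hgy1, hgy2⟩ := hby
      obtain ⟨hxs, hxe⟩ := adj_prefix hadjx hdegx
      obtain ⟨hys, hye⟩ := adj_prefix hadjy hdegy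
      rw [h1] at hxe hxs
      have hlen : x.2.1.edges.length = y.2.1.edges.length := by
        have h2 := congrArg List.length hfx1.2
        have h3 := congrArg List.length hgy1.2
        simp at h2 h3; omega
      have hedges : x.2.1.edges = y.2.1.edges :=
        (List.prefix_of_prefix_length_le hxe hye (le_of_eq hlen)).eq_of_length hlen
      have hfg : f = g := by
        rw [hfx1.2, hgy1.2] at hedges
        simpa using List.append_cancel_left hedges
      have h21 : x.2.1 = y.2.1 :=
        FPath.ext' (by rw [hfx1.1, hgy1.1]) hedges
      have h22 : x.2.2 = y.2.2 :=
        FPath.ext' (by rw [hfx2.1, hgy2.1]) (by rw [hfx2.2, hgy2.2, hfg])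
      have : x.2 = y.2 := Prod.ext h21 h22
      exact Prod.ext h1 this
    · -- x split, y not: contradiction since p ∉ J'
      exfalso
      have : y.2 = p := by
        have := congrArg Prod.snd hxy
        simpa using this.symm
      rw [this] at hbyJ'
      exact hpJ' hbyJ'
    · exfalso
      have : x.2 = p := by
        have := congrArg Prod.snd hxy
        simpa using this
      rw [this] at hbxJ'
      exact hpJ' hbxJ'
    · exact hxy
end

section
/- Let J be as given, and suppose that every edge of the coding graph E_J is non-negative and that E_J contains no non-positive cycles. Let ω and ξ be finite paths in E_J with E(ω) = E(ξ), and write r(ω) = (μ_1, eν_1) and r(ξ) = (μ_2, eν_2) (the distinguished first edges of the range vertices coincide because the E-labels agree). Then the tails ν_1 and ν_2 are prefix-comparable (ν_1 ≼ ν_2 or ν_2 ≼ ν_1; equivalently, L_r(ω)^* L_r(ξ) ≠ 0 in the Leavitt path algebra) if and only if ω = ξ. -/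
variable {G : FinGraph}

/-! ### Auxiliary lemmas for the proof -/

lemma fpath_ext {p q : FPath G} (hs : p.source = q.source) (he : p.edges = q.edges) :
    p = q := by
  cases p; cases q; simp_all

/-- A choice of an outgoing edge at every vertex. -/
noncomputable def nextEdge (hG : Standing G) : G.V → G.E :=
  fun v => (hG.no_sinks v).choose

lemma nextEdge_src (hG : Standing G) (v : G.V) : G.src (nextEdge hG v) = v :=
  (hG.no_sinks v).choose_spec

/-- The edge sequence of an infinite extension of the finite path `p`. -/
noncomputable def extSeq (hG : Standing G) (p : FPath G) : ℕ → G.E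
  | 0 => p.edges.getD 0 (nextEdge hG p.source)
  | n + 1 => p.edges.getD (n + 1) (nextEdge hG (G.rng (extSeq hG p n)))

lemma extSeq_lt (hG : Standing G) (p : FPath G) (i : ℕ) (h : i < p.edges.length) :
    extSeq hG p i = p.edges.get ⟨i, h⟩ := by
  cases i with
  | zero => rw [extSeq]; exact List.getD_eq_getElem _ _ h
  | succ n => rw [extSeq]; exact List.getD_eq_getElem _ _ h

lemma extSeq_chain (hG : Standing G) (p : FPath G) (i : ℕ) :
    G.rng (extSeq hG p i) = G.src (extSeq hG p (i + 1)) := by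
  by_cases h : i + 1 < p.edges.length
  · have h' : i < p.edges.length := Nat.lt_of_succ_lt h
    rw [extSeq_lt hG p i h', extSeq_lt hG p (i + 1) h]
    exact List.isChain_iff_getElem.mp p.chain i (by omega)
  · have : extSeq hG p (i + 1) = nextEdge hG (G.rng (extSeq hG p i)) := by
      rw [extSeq]; exact List.getD_eq_default _ _ (Nat.le_of_not_lt h)
    rw [this, nextEdge_src]

/-- An infinite extension of the finite path `p`. -/
noncomputable def extIPath (hG : Standing G) (p : FPath G) : IPath G :=
  ⟨extSeq hG p, extSeq_chain hG p⟩

lemma extIPath_mem (hG : Standing G) (p : FPath G) : extIPath hG p ∈ cylinder p := by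
  constructor
  · show G.src (extSeq hG p 0) = p.source
    cases hp : p.edges with
    | nil => rw [extSeq, hp]; simp [nextEdge_src]
    | cons a l =>
      have h0 : 0 < p.edges.length := by rw [hp]; simp
      rw [extSeq_lt hG p 0 h0]
      exact p.head_src _ (by simp [hp, Option.mem_def])
  · intro i h; exact extSeq_lt hG p i h

lemma cylinder_mono {p q : FPath G} (h : FPath.Prefix p q) : cylinder q ⊆ cylinder p := by
  rintro r ⟨hs, hi⟩
  refine ⟨hs.trans h.1.symm, fun i hilt => ?_⟩
  have hlen : i < q.edges.length := lt_of_lt_of_le hilt h.2.length_le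
  rw [hi i hlen]
  simp only [List.get_eq_getElem]
  exact (h.2.getElem hilt).symm

/-- Two pairs in `J` with prefix-comparable second coordinates are equal. -/
lemma eq_of_snd_comparable (hG : Standing G) {J : Set (FPath G × FPath G)}
    (hJ : IsUnitaryJ G J) {p q : FPath G × FPath G} (hp : p ∈ J) (hq : q ∈ J)
    (h : FPath.Prefix p.2 q.2 ∨ FPath.Prefix q.2 p.2) : p = q := by
  by_contra hne
  have hd := hJ.disj₂ p hp q hq hne
  rcases h with h | h
  · have hm : extIPath hG q.2 ∈ cylinder p.2 ∩ cylinder q.2 :=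
      ⟨cylinder_mono h (extIPath_mem hG q.2), extIPath_mem hG q.2⟩
    rw [hd] at hm; exact hm
  · have hm : extIPath hG p.2 ∈ cylinder p.2 ∩ cylinder q.2 :=
      ⟨extIPath_mem hG p.2, cylinder_mono h (extIPath_mem hG p.2)⟩
    rw [hd] at hm; exact hm

/-- Comparable tails and the same first edge give comparable paths. -/
lemma snd_comparable_of_tails {p q : FPath G × FPath G} {e : G.E}
    (hp : p.2.edges.head? = some e) (hq : q.2.edges.head? = some e)
    (h : FPath.Prefix p.2.tail q.2.tail ∨ FPath.Prefix q.2.tail p.2.tail) :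
    FPath.Prefix p.2 q.2 ∨ FPath.Prefix q.2 p.2 := by
  have hsp : G.src e = p.2.source := p.2.head_src e hp
  have hsq : G.src e = q.2.source := q.2.head_src e hq
  obtain ⟨t₁, ht₁⟩ : ∃ t, p.2.edges = e :: t := by
    cases hpe : p.2.edges with
    | nil => rw [hpe] at hp; simp at hp
    | cons a l => rw [hpe] at hp; simp at hp; exact ⟨l, by rw [hp]⟩
  obtain ⟨t₂, ht₂⟩ : ∃ t, q.2.edges = e :: t := by
    cases hqe : q.2.edges with
    | nil => rw [hqe] at hq; simp at hq
    | cons a l => rw [hqe] at hq; simp at hq; exact ⟨l, by rw [hq]⟩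
  have htl₁ : p.2.tail.edges = t₁ := by simp [FPath.tail, ht₁]
  have htl₂ : q.2.tail.edges = t₂ := by simp [FPath.tail, ht₂]
  rcases h with ⟨_, h2⟩ | ⟨_, h2⟩
  · left
    refine ⟨hsp.symm.trans hsq, ?_⟩
    rw [ht₁, ht₂, List.cons_prefix_cons]
    exact ⟨rfl, htl₁ ▸ htl₂ ▸ h2⟩
  · right
    refine ⟨hsq.symm.trans hsp, ?_⟩
    rw [ht₁, ht₂, List.cons_prefix_cons]
    exact ⟨rfl, htl₁ ▸ htl₂ ▸ h2⟩

/-- With all edges non-negative, adjacency means `ν₁ ≼ μ₂`. -/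
lemma adj_prefix_s14 {J : Set (FPath G × FPath G)} (hnn : AllEdgesNonneg G J)
    {p q : FPath G × FPath G} (hp : p ∈ J) (hq : q ∈ J) (h : CGAdj p q) :
    FPath.Prefix p.2.tail q.1 := by
  rcases h' : h with h1 | h1
  · exact h1
  · have hd := hnn p hp q hq h
    have hlen : p.2.tail.edges.length ≤ q.1.edges.length := by
      unfold cgDeg at hd; omega
    have heq : q.1.edges = p.2.tail.edges := h1.2.eq_of_length_le hlen
    exact ⟨h1.1.symm, heq ▸ List.prefix_refl _⟩

lemma comparable_of_prefix_prefix {a b r : FPath G} (ha : FPath.Prefix a r)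
    (hb : FPath.Prefix b r) : FPath.Prefix a b ∨ FPath.Prefix b a := by
  rcases List.prefix_or_prefix_of_prefix ha.2 hb.2 with h | h
  · exact Or.inl ⟨ha.1.trans hb.1.symm, h⟩
  · exact Or.inr ⟨hb.1.trans ha.1.symm, h⟩

lemma head?_some_of_mem {J : Set (FPath G × FPath G)} (hJ : IsUnitaryJ G J)
    {p : FPath G × FPath G} (hp : p ∈ J) : ∃ e, p.2.edges.head? = some e := by
  cases hpe : p.2.edges with
  | nil => exact absurd hpe (hJ.ne_nil p hp)
  | cons a l => exact ⟨a, rfl⟩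

/-- The key induction, performed on reversed vertex lists. -/
lemma aux_main (hG : Standing G) {J : Set (FPath G × FPath G)} (hJ : IsUnitaryJ G J)
    (hnn : AllEdgesNonneg G J) :
    ∀ l₁ l₂ : List (FPath G × FPath G),
      (∀ v ∈ l₁, v ∈ J) → (∀ v ∈ l₂, v ∈ J) →
      l₁.Chain' (flip CGAdj) → l₂.Chain' (flip CGAdj) →
      l₁.filterMap (fun v => v.2.edges.head?) = l₂.filterMap (fun v => v.2.edges.head?) →
      ∀ a b, l₁.head? = some a → l₂.head? = some b →
      (FPath.Prefix a.2.tail b.2.tail ∨ FPath.Prefix b.2.tail a.2.tail) →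
      l₁ = l₂ := by
  intro l₁
  induction l₁ with
  | nil => intro l₂ _ _ _ _ _ a b ha _ _; simp at ha
  | cons a t₁ ih =>
    intro l₂ hm₁ hm₂ hc₁ hc₂ hlab a' b ha hb hcmp
    cases l₂ with
    | nil => simp at hb
    | cons b' t₂ =>
      obtain rfl : a = a' := by simpa using ha
      obtain rfl : b' = b := by simpa using hb
      have haJ : a ∈ J := hm₁ a (by simp)
      have hbJ : b' ∈ J := hm₂ b' (by simp)
      obtain ⟨e₁, he₁⟩ := head?_some_of_mem hJ haJ
      obtain ⟨e₂, he₂⟩ := head?_some_of_mem hJ hbJ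
      rw [List.filterMap_cons, he₁, List.filterMap_cons, he₂] at hlab
      obtain ⟨heq, hrest⟩ := List.cons.injEq _ _ _ _ ▸ hlab
      subst heq
      have hab : a = b' :=
        eq_of_snd_comparable hG hJ haJ hbJ (snd_comparable_of_tails he₁ he₂ hcmp)
      subst hab
      cases t₁ with
      | nil =>
        cases t₂ with
        | nil => rfl
        | cons c r =>
          obtain ⟨e, he⟩ := head?_some_of_mem hJ (hm₂ c (by simp))
          rw [List.filterMap_cons, he] at hrest
          simp at hrest
      | cons p r₁ =>
        cases t₂ with
        | nil =>
          obtain ⟨e, he⟩ := head?_some_of_mem hJ (hm₁ p (by simp))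
          rw [List.filterMap_cons, he] at hrest
          simp at hrest
        | cons p' r₂ =>
          have hadj₁ : CGAdj p a := (List.isChain_cons_cons.mp hc₁).1
          have hadj₂ : CGAdj p' a := (List.isChain_cons_cons.mp hc₂).1
          have h₁ := adj_prefix_s14 hnn (hm₁ p (by simp)) haJ hadj₁
          have h₂ := adj_prefix_s14 hnn (hm₂ p' (by simp)) haJ hadj₂
          have hcmp' := comparable_of_prefix_prefix h₁ h₂
          have ht : p :: r₁ = p' :: r₂ :=
            ih (p' :: r₂) (fun v hv => hm₁ v (by simp [hv]))
              (fun v hv => hm₂ v (by simp [hv]))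
              (List.isChain_cons_cons.mp hc₁).2 (List.isChain_cons_cons.mp hc₂).2
              hrest p p' rfl rfl hcmp'
          rw [ht]

/-- Lemma 5.6: if all edges of `E_J` are non-negative and `E_J` has no
non-positive cycles, then for paths `ω, ξ` in `E_J` with the same `E`-label, the tails
of (the second coordinates of) their range vertices are prefix-comparable (the
combinatorial content of `L_r(ω)^* L_r(ξ) ≠ 0`) if and only if `ω = ξ`. -/
theorem range_labels_comparable_iff (G : FinGraph) (hG : Standing G)
    (J : Set (FPath G × FPath G)) (hJ : IsUnitaryJ G J)
    (hnn : AllEdgesNonneg G J) (hnc : ¬ HasNonposCycle G J)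
    (ω ξ : CGPath G J) (he : ω.elabel = ξ.elabel) :
    (FPath.Prefix (ω.verts.getLast ω.ne).2.tail (ξ.verts.getLast ξ.ne).2.tail ∨
      FPath.Prefix (ξ.verts.getLast ξ.ne).2.tail (ω.verts.getLast ω.ne).2.tail) ↔
    ω = ξ := by
  constructor
  · intro h
    have hrev : ω.verts.reverse = ξ.verts.reverse := by
      refine aux_main hG hJ hnn _ _
        (fun v hv => ω.mem v (List.mem_reverse.mp hv))
        (fun v hv => ξ.mem v (List.mem_reverse.mp hv))
        (List.isChain_reverse.mpr ω.adj) (List.isChain_reverse.mpr ξ.adj)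
        ?_ _ _ ?_ ?_ h
      · rw [List.filterMap_reverse, List.filterMap_reverse]
        exact congrArg List.reverse he
      · rw [List.head?_reverse, List.getLast?_eq_getLast ω.ne]
      · rw [List.head?_reverse, List.getLast?_eq_getLast ξ.ne]
    have hv : ω.verts = ξ.verts := by
      have := congrArg List.reverse hrev; simpa using this
    cases ω; cases ξ; simp_all
  · rintro rfl
    exact Or.inl ⟨rfl, List.prefix_refl _⟩
end
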